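/- arXiv:2509.25972 — 2 statements merged into one kernel-verified Lean document; each statement's English description precedes it below -/
import Mathlib

section
/- The group J(ℤ) is an URE-group: for every g ∈ J(ℤ), every integer n ≥ 1, and every ω, ω′ ∈ J(ℤ), if ω^[n] = g and ω′^[n] = g then ω = ω′. -/
open PowerSeries Finset

/-- Composition `f ∘ g` of formal power series (substitution of `g` into `f`).
This coefficientwise formula agrees with the usual substitution whenever the
constant coefficient of `g` is zero, since then `g ^ j` has order at least `j`. -/
noncomputable def psComp {Z : Type*} [CommRing Z] (f g : Z⟦X⟧) : Z⟦X⟧ :=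
  PowerSeries.mk fun n => ∑ j ∈ Finset.range (n + 1), coeff j f * coeff n (g ^ j)

/-- The `m`-th compositional iterate: `ω^[0] = X` and `ω^[m+1] = ω ∘ ω^[m]`. -/
noncomputable def psIter {Z : Type*} [CommRing Z] (ω : Z⟦X⟧) : ℕ → Z⟦X⟧
  | 0 => PowerSeries.X
  | m + 1 => psComp ω (psIter ω m)

lemma psComp_coeff (f g : ℤ⟦X⟧) (n : ℕ) :
    coeff n (psComp f g) = ∑ j ∈ Finset.range (n + 1), coeff j f * coeff n (g ^ j) := by
  simp [psComp]

lemma X_pow_dvd_pow_sub_pow {τ τ' : ℤ⟦X⟧} {k : ℕ}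
    (hk : (X : ℤ⟦X⟧) ^ k ∣ (τ - τ')) (h0 : (X : ℤ⟦X⟧) ∣ τ) (h0' : (X : ℤ⟦X⟧) ∣ τ') (j : ℕ) :
    (X : ℤ⟦X⟧) ^ (k + j) ∣ (τ ^ (j + 1) - τ' ^ (j + 1)) := by
  rw [← geom_sum₂_mul τ τ' (j + 1), pow_add, mul_comm ((X:ℤ⟦X⟧)^k)]
  refine mul_dvd_mul ?_ hk
  refine Finset.dvd_sum fun i hi => ?_
  have hi' : i ≤ j := Nat.lt_succ_iff.mp (Finset.mem_range.mp hi)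
  have : (X : ℤ⟦X⟧) ^ j = X ^ i * X ^ (j - i) := by rw [← pow_add, Nat.add_sub_cancel' hi']
  rw [this]
  exact mul_dvd_mul (pow_dvd_pow_of_dvd h0 i) (pow_dvd_pow_of_dvd h0' (j - i))

lemma coeff_pow_congr {τ τ' : ℤ⟦X⟧} {k : ℕ}
    (hlt : ∀ j, j < k → coeff j τ = coeff j τ')
    (h0 : constantCoeff τ = 0) (h0' : constantCoeff τ' = 0)
    {j m : ℕ} (hj : 1 ≤ j) (hm : m + 1 < k + j) :
    coeff m (τ ^ j) = coeff m (τ' ^ j) := by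
  have hdvd : (X : ℤ⟦X⟧) ^ k ∣ (τ - τ') := by
    rw [X_pow_dvd_iff]
    intro i hi; simp [hlt i hi]
  obtain ⟨j', rfl⟩ : ∃ j', j = j' + 1 := ⟨j - 1, by omega⟩
  have := X_pow_dvd_pow_sub_pow hdvd (X_dvd_iff.mpr h0) (X_dvd_iff.mpr h0') j'
  have hz : coeff m (τ ^ (j' + 1) - τ' ^ (j' + 1)) = 0 := by
    rw [X_pow_dvd_iff] at this
    exact this m (by omega)
  rw [map_sub, sub_eq_zero] at hz
  exact hz

lemma coeff_pow_self {τ : ℤ⟦X⟧} (h0 : constantCoeff τ = 0) (h1 : coeff 1 τ = 1)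
    {k : ℕ} (hk : 1 ≤ k) : coeff k (τ ^ k) = 1 := by
  have : coeff k (τ ^ k) = coeff k ((X : ℤ⟦X⟧) ^ k) := by
    refine coeff_pow_congr (k := 2) ?_ h0 (by simp) hk (by omega)
    intro j hj
    interval_cases j <;>
      simp [h0, h1, coeff_zero_eq_constantCoeff]
  rw [this, coeff_X_pow]; simp

lemma psIter_J {ω : ℤ⟦X⟧} (h0 : constantCoeff ω = 0) (h1 : coeff 1 ω = 1) :
    ∀ m, constantCoeff (psIter ω m) = 0 ∧ coeff 1 (psIter ω m) = 1 := by
  intro m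
  induction m with
  | zero => simp [psIter]
  | succ m ih =>
    obtain ⟨ih0, ih1⟩ := ih
    constructor
    · rw [← coeff_zero_eq_constantCoeff, psIter, psComp_coeff]
      simp [coeff_zero_eq_constantCoeff, h0]
    · rw [psIter, psComp_coeff]
      simp [Finset.sum_range_succ, coeff_zero_eq_constantCoeff, h0, h1, ih1]

/-- coeff k of composition, for k ≥ 2 and τ ∈ J, ω with linear coefficient 1. -/
lemma psComp_coeff_k {ω τ : ℤ⟦X⟧} (hω1 : coeff 1 ω = 1)
    (hτ0 : constantCoeff τ = 0) (hτ1 : coeff 1 τ = 1) {k : ℕ} (hk : 2 ≤ k) :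
    coeff k (psComp ω τ) =
      coeff k τ + coeff k ω + ∑ j ∈ Finset.Ico 2 k, coeff j ω * coeff k (τ ^ j) := by
  rw [psComp_coeff, Finset.sum_range_succ]
  have hsplit : ∑ j ∈ Finset.range k, coeff j ω * coeff k (τ ^ j)
      = (∑ j ∈ Finset.range 2, coeff j ω * coeff k (τ ^ j))
        + ∑ j ∈ Finset.Ico 2 k, coeff j ω * coeff k (τ ^ j) := by
    rw [Finset.range_eq_Ico, ← Finset.sum_Ico_consecutive _ (by omega : 0 ≤ 2) hk, Finset.range_eq_Ico]
  rw [hsplit, coeff_pow_self hτ0 hτ1 (by omega)]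
  have h2 : ∑ j ∈ Finset.range 2, coeff j ω * coeff k (τ ^ j) = coeff k τ := by
    rw [Finset.sum_range_succ, Finset.sum_range_one]
    simp [hω1, coeff_one, (by omega : k ≠ 0)]
    intro h; omega
  rw [h2]; ring

/-- Low coefficients of a composition depend only on low coefficients. -/
lemma psComp_coeff_lt {ω ω' τ τ' : ℤ⟦X⟧} {k : ℕ}
    (hτ0 : constantCoeff τ = 0) (hτ'0 : constantCoeff τ' = 0)
    (hω : ∀ j, j < k → coeff j ω = coeff j ω')
    (hτ : ∀ j, j < k → coeff j τ = coeff j τ') :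
    ∀ m, m < k → coeff m (psComp ω τ) = coeff m (psComp ω' τ') := by
  intro m hm
  rw [psComp_coeff, psComp_coeff]
  refine Finset.sum_congr rfl fun j hj => ?_
  have hj' : j ≤ m := Nat.lt_succ_iff.mp (Finset.mem_range.mp hj)
  rw [hω j (by omega)]
  rcases Nat.eq_zero_or_pos j with rfl | hpos
  · simp
  · rw [coeff_pow_congr hτ hτ0 hτ'0 hpos (by omega)]

lemma iter_diff {ω ω' : ℤ⟦X⟧}
    (hω0 : constantCoeff ω = 0) (hω1 : coeff 1 ω = 1)
    (hω'0 : constantCoeff ω' = 0) (hω'1 : coeff 1 ω' = 1)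
    {k : ℕ} (hk : 2 ≤ k) (hlow : ∀ j, j < k → coeff j ω = coeff j ω') :
    ∀ m, (∀ j, j < k → coeff j (psIter ω m) = coeff j (psIter ω' m)) ∧
      coeff k (psIter ω m) - coeff k (psIter ω' m)
        = m * (coeff k ω - coeff k ω') := by
  intro m
  induction m with
  | zero => simp [psIter]
  | succ m ih =>
    obtain ⟨ihlow, ihk⟩ := ih
    obtain ⟨hτ0, hτ1⟩ := psIter_J hω0 hω1 m
    obtain ⟨hτ'0, hτ'1⟩ := psIter_J hω'0 hω'1 m
    constructor
    · exact fun j hj => psComp_coeff_lt hτ0 hτ'0 hlow ihlow j hj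
    · show coeff k (psComp ω (psIter ω m)) - coeff k (psComp ω' (psIter ω' m)) = _
      rw [psComp_coeff_k hω1 hτ0 hτ1 hk, psComp_coeff_k hω'1 hτ'0 hτ'1 hk]
      have hS : ∑ j ∈ Finset.Ico 2 k, coeff j ω * coeff k ((psIter ω m) ^ j)
          = ∑ j ∈ Finset.Ico 2 k, coeff j ω' * coeff k ((psIter ω' m) ^ j) := by
        refine Finset.sum_congr rfl fun j hj => ?_
        obtain ⟨hj2, hjk⟩ := Finset.mem_Ico.mp hj
        rw [hlow j hjk, coeff_pow_congr ihlow hτ0 hτ'0 (by omega) (by omega)]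
      rw [hS]
      push_cast
      linear_combination ihk


/-- `𝒥(ℤ)` is an URE-group: iterative roots of any order `n ≥ 1` are unique. -/
theorem substitution_group_int_URE (g : ℤ⟦X⟧)
    (hg0 : constantCoeff g = 0) (hg1 : coeff 1 g = 1)
    (n : ℕ) (hn : 1 ≤ n) (ω ω' : ℤ⟦X⟧)
    (hω0 : constantCoeff ω = 0) (hω1 : coeff 1 ω = 1)
    (hω'0 : constantCoeff ω' = 0) (hω'1 : coeff 1 ω' = 1)
    (hroot : psIter ω n = g) (hroot' : psIter ω' n = g) :
    ω = ω' := by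
  ext k
  induction k using Nat.strong_induction_on with
  | _ k ih =>
    match k, ih with
    | 0, _ => rw [coeff_zero_eq_constantCoeff, hω0, hω'0]
    | 1, _ => rw [hω1, hω'1]
    | (k + 2), ih =>
      have hk : 2 ≤ k + 2 := by omega
      have hlow : ∀ j, j < k + 2 → coeff j ω = coeff j ω' :=
        fun j hj => ih j hj
      have := (iter_diff hω0 hω1 hω'0 hω'1 hk hlow n).2
      rw [hroot, hroot', sub_self] at this
      have hd : coeff (k + 2) ω - coeff (k + 2) ω' = 0 := by
        have hn' : (n : ℤ) ≠ 0 := by exact_mod_cast (by omega : n ≠ 0)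
        exact (mul_eq_zero.mp this.symm).resolve_left hn'
      linarith [hd]
end

section
/- Let K be a field of characteristic 0. Then the Riordan group R′(K) is an algebraically complete URE-group: for every f ∈ K⟦x⟧ with constant coefficient 1, every g ∈ J(K), and every integer n ≥ 1, there exists a unique pair (α, ω) with α ∈ K⟦x⟧ of constant coefficient 1 and ω ∈ J(K) such that ω^[n] = g and α · (α ∘ ω) · (α ∘ ω^[2]) ⋯ (α ∘ ω^[n−1]) = f (equivalently, R(α,ω)^n = R(f,g)). -/
open PowerSeries Finset

section Lemmas

variable {R : Type*} [CommRing R]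

lemma coeff_psComp (f g : R⟦X⟧) (n : ℕ) :
    coeff n (psComp f g) = ∑ j ∈ Finset.range (n + 1), coeff j f * coeff n (g ^ j) := by
  simp [psComp]

lemma constantCoeff_psComp (f g : R⟦X⟧) :
    constantCoeff (psComp f g) = constantCoeff f := by
  rw [← coeff_zero_eq_constantCoeff_apply, ← coeff_zero_eq_constantCoeff_apply, coeff_psComp]
  simp

lemma coeff_one_psComp (f g : R⟦X⟧) :
    coeff 1 (psComp f g) = coeff 1 f * coeff 1 g := by
  rw [coeff_psComp]
  simp [Finset.sum_range_succ]

lemma coeff_pow_eq_zero {g : R⟦X⟧} (hg : constantCoeff g = 0) {m j : ℕ} (h : m < j) :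
    coeff m (g ^ j) = 0 := by
  have : (X : R⟦X⟧) ^ j ∣ g ^ j := pow_dvd_pow_of_dvd (X_dvd_iff.2 hg) j
  exact X_pow_dvd_iff.1 this m h

lemma coeff_pow_self_s16 {g : R⟦X⟧} (hg : constantCoeff g = 0) (j : ℕ) :
    coeff j (g ^ j) = (coeff 1 g) ^ j := by
  obtain ⟨ψ, rfl⟩ := X_dvd_iff.2 hg
  have h1 : coeff 1 (X * ψ) = constantCoeff ψ := by
    simpa using coeff_succ_X_mul 0 ψ
  have : coeff j ((X * ψ) ^ j) = coeff 0 (ψ ^ j) := by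
    rw [mul_pow]
    simpa using coeff_X_pow_mul (ψ ^ j) j 0
  rw [this, coeff_zero_eq_constantCoeff_apply, map_pow, h1]

/-- Key congruence: coefficients of `g ^ j` below `k` (or at `k` when `j ≥ 2`)
depend only on the coefficients of `g` below `k`. -/
lemma coeff_pow_congr_s16 {g g' : R⟦X⟧} (hg : constantCoeff g = 0)
    (hg' : constantCoeff g' = 0) {k : ℕ}
    (hagr : ∀ j < k, coeff j g = coeff j g') :
    ∀ j m, m ≤ k → (m < k ∨ 2 ≤ j) → coeff m (g ^ j) = coeff m (g' ^ j) := by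
  intro j
  induction j with
  | zero => intro m _ _; simp
  | succ j ih =>
    intro m hmk hcond
    rw [pow_succ', pow_succ', coeff_mul, coeff_mul]
    refine Finset.sum_congr rfl ?_
    rintro ⟨a, b⟩ hab
    have hab' : a + b = m := Finset.HasAntidiagonal.mem_antidiagonal.1 hab
    rcases Nat.eq_zero_or_pos a with ha0 | ha
    · subst ha0
      simp only [coeff_zero_eq_constantCoeff_apply, hg, hg', zero_mul]
    · have hbk : b < k := by omega
      have hcoeff : coeff b (g ^ j) = coeff b (g' ^ j) :=
        ih b (le_of_lt hbk) (Or.inl hbk)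
      rcases lt_or_eq_of_le (show a ≤ k by omega) with hak | hak
      · rw [hagr a hak, hcoeff]
      · -- a = k, so m = k, b = 0, and j ≥ 1
        have hm : m = k := by omega
        have hj : 1 ≤ j := by omega
        have hb0 : b = 0 := by omega
        subst hb0
        have : coeff 0 (g ^ j) = 0 := by
          rw [coeff_zero_eq_constantCoeff_apply, map_pow, hg, zero_pow (by omega)]
        have h' : coeff 0 (g' ^ j) = 0 := by
          rw [coeff_zero_eq_constantCoeff_apply, map_pow, hg', zero_pow (by omega)]
        rw [this, h', mul_zero, mul_zero]

lemma coeff_psComp_congr_lt {ψ ψ' φ φ' : R⟦X⟧} (hφ0 : constantCoeff φ = 0)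
    (hφ0' : constantCoeff φ' = 0) {k : ℕ}
    (hψagr : ∀ j < k, coeff j ψ = coeff j ψ')
    (hφagr : ∀ j < k, coeff j φ = coeff j φ') :
    ∀ m < k, coeff m (psComp ψ φ) = coeff m (psComp ψ' φ') := by
  intro m hm
  rw [coeff_psComp, coeff_psComp]
  refine Finset.sum_congr rfl fun j hj => ?_
  have hjm : j ≤ m := by simpa [Nat.lt_succ_iff] using hj
  rw [hψagr j (lt_of_le_of_lt hjm hm),
    coeff_pow_congr_s16 hφ0 hφ0' hφagr j m (le_of_lt hm) (Or.inl hm)]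

lemma coeff_psComp_sub {ψ ψ' φ φ' : R⟦X⟧} (hφ0 : constantCoeff φ = 0)
    (hφ0' : constantCoeff φ' = 0) (hφ1 : coeff 1 φ = 1) (hψ1 : coeff 1 ψ = 1)
    {k : ℕ} (hk : 2 ≤ k)
    (hψagr : ∀ j < k, coeff j ψ = coeff j ψ')
    (hφagr : ∀ j < k, coeff j φ = coeff j φ') :
    coeff k (psComp ψ φ) - coeff k (psComp ψ' φ')
      = (coeff k ψ - coeff k ψ') + (coeff k φ - coeff k φ') := by
  have hφ1' : coeff 1 φ' = 1 := by rw [← hφagr 1 (by omega), hφ1]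
  have hψ1' : coeff 1 ψ' = 1 := by rw [← hψagr 1 (by omega), hψ1]
  rw [coeff_psComp, coeff_psComp, ← Finset.sum_sub_distrib]
  have : ∀ j ∈ Finset.range (k + 1),
      coeff j ψ * coeff k (φ ^ j) - coeff j ψ' * coeff k (φ' ^ j)
        = (if j = 1 then coeff k φ - coeff k φ' else 0)
          + (if j = k then coeff k ψ - coeff k ψ' else 0) := by
    intro j hj
    have hjk : j ≤ k := by simpa [Nat.lt_succ_iff] using hj
    by_cases h0 : j = 0
    · subst h0
      simp [coeff_one, (show k ≠ 0 by omega), (show ¬ (0:ℕ) = k by omega)]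
    by_cases h1 : j = 1
    · subst h1
      rw [pow_one, pow_one, hψ1, hψ1', one_mul, one_mul]
      simp [(show ¬ (1:ℕ) = k by omega)]
    by_cases hk' : j = k
    · subst hk'
      rw [coeff_pow_self_s16 hφ0, coeff_pow_self_s16 hφ0', hφ1, hφ1', one_pow, mul_one, mul_one]
      simp [h1]
    · rw [hψagr j (lt_of_le_of_ne hjk hk'),
        coeff_pow_congr_s16 hφ0 hφ0' hφagr j k le_rfl (Or.inr (by omega))]
      simp [h1, hk']
  rw [Finset.sum_congr rfl this, Finset.sum_add_distrib,
    Finset.sum_ite_eq' (Finset.range (k+1)) 1, Finset.sum_ite_eq' (Finset.range (k+1)) k,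
    if_pos (Finset.mem_range.2 (by omega)), if_pos (Finset.mem_range.2 (by omega))]
  ring

/-- Iterates of elements of `J` stay in `J`. -/
lemma psIter_inJ {ω : R⟦X⟧} (h0 : constantCoeff ω = 0) (h1 : coeff 1 ω = 1) (m : ℕ) :
    constantCoeff (psIter ω m) = 0 ∧ coeff 1 (psIter ω m) = 1 := by
  induction m with
  | zero => simp [psIter]
  | succ m ih =>
    refine ⟨?_, ?_⟩
    · rw [psIter, constantCoeff_psComp, h0]
    · rw [psIter, coeff_one_psComp, h1, ih.2, one_mul]

/-- Key lemma for iterates: coefficients below `k` depend only on coefficients below `k`,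
and the `k`-th coefficient of the `m`-th iterate is `m`-times-linear in the `k`-th coeff. -/
lemma coeff_psIter_sub {ω ω' : R⟦X⟧} (hω0 : constantCoeff ω = 0)
    (hω0' : constantCoeff ω' = 0) (hω1 : coeff 1 ω = 1) (hω1' : coeff 1 ω' = 1)
    {k : ℕ} (hk : 2 ≤ k) (hagr : ∀ j < k, coeff j ω = coeff j ω') (m : ℕ) :
    (∀ j < k, coeff j (psIter ω m) = coeff j (psIter ω' m)) ∧
      coeff k (psIter ω m) - coeff k (psIter ω' m)
        = (m : R) * (coeff k ω - coeff k ω') := by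
  induction m with
  | zero => simp [psIter]
  | succ m ih =>
    have hI := psIter_inJ hω0 hω1 m
    have hI' := psIter_inJ hω0' hω1' m
    constructor
    · intro j hj
      exact coeff_psComp_congr_lt hI.1 hI'.1 hagr ih.1 j hj
    · rw [psIter, psIter, coeff_psComp_sub hI.1 hI'.1 hI.2 hω1 hk hagr ih.1, ih.2]
      push_cast
      ring

/-- Composition on the left: coefficient congruence and linear difference formula. -/
lemma coeff_psComp_left {α α' φ : R⟦X⟧} (hφ0 : constantCoeff φ = 0)
    (hφ1 : coeff 1 φ = 1) {k : ℕ} (hagr : ∀ j < k, coeff j α = coeff j α') :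
    (∀ m < k, coeff m (psComp α φ) = coeff m (psComp α' φ)) ∧
      coeff k (psComp α φ) - coeff k (psComp α' φ) = coeff k α - coeff k α' := by
  constructor
  · intro m hm
    rw [coeff_psComp, coeff_psComp]
    refine Finset.sum_congr rfl fun j hj => ?_
    have : j < k := by
      have := Finset.mem_range.1 hj; omega
    rw [hagr j this]
  · rw [coeff_psComp, coeff_psComp, ← Finset.sum_sub_distrib]
    rw [Finset.sum_eq_single_of_mem k (Finset.mem_range.2 (by omega))]
    · rw [coeff_pow_self_s16 hφ0, hφ1, one_pow, mul_one, mul_one]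
    · intro j hj hjk
      have : j < k := by
        have := Finset.mem_range.1 hj; omega
      rw [hagr j this, sub_self]

/-- Product congruence: if each factor agrees below `k` and all constant coefficients
are `1`, the difference of the `k`-th coefficients of products is the sum of the
differences. -/
lemma coeff_prod_sub {P P' : ℕ → R⟦X⟧} (h0 : ∀ i, constantCoeff (P i) = 1)
    (h0' : ∀ i, constantCoeff (P' i) = 1) {k : ℕ} (hk : 1 ≤ k)
    (hagr : ∀ i, ∀ j < k, coeff j (P i) = coeff j (P' i)) (n : ℕ) :
    (∀ m < k, coeff m (∏ i ∈ Finset.range n, P i) = coeff m (∏ i ∈ Finset.range n, P' i)) ∧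
      coeff k (∏ i ∈ Finset.range n, P i) - coeff k (∏ i ∈ Finset.range n, P' i)
        = ∑ i ∈ Finset.range n, (coeff k (P i) - coeff k (P' i)) := by
  induction n with
  | zero => simp
  | succ n ih =>
    have hQ0 : constantCoeff (∏ i ∈ Finset.range n, P i) = 1 := by
      rw [map_prod]; exact Finset.prod_eq_one fun i _ => h0 i
    have hQ0' : constantCoeff (∏ i ∈ Finset.range n, P' i) = 1 := by
      rw [map_prod]; exact Finset.prod_eq_one fun i _ => h0' i
    constructor
    · intro m hm
      rw [Finset.prod_range_succ, Finset.prod_range_succ, coeff_mul, coeff_mul]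
      refine Finset.sum_congr rfl fun p hp => ?_
      have hab : p.1 + p.2 = m := Finset.HasAntidiagonal.mem_antidiagonal.1 hp
      rw [ih.1 p.1 (by omega), hagr n p.2 (by omega)]
    · rw [Finset.prod_range_succ, Finset.prod_range_succ, coeff_mul, coeff_mul,
        ← Finset.sum_sub_distrib, Finset.sum_range_succ, ← ih.2]
      rw [Finset.Nat.sum_antidiagonal_eq_sum_range_succ_mk, ]
      have : ∀ a ∈ Finset.range (k + 1),
          coeff a (∏ i ∈ Finset.range n, P i) * coeff (k - a) (P n)
            - coeff a (∏ i ∈ Finset.range n, P' i) * coeff (k - a) (P' n)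
          = (if a = 0 then coeff k (P n) - coeff k (P' n) else 0)
            + (if a = k then coeff k (∏ i ∈ Finset.range n, P i)
                - coeff k (∏ i ∈ Finset.range n, P' i) else 0) := by
        intro a ha
        have hak : a ≤ k := by
          have := Finset.mem_range.1 ha; omega
        by_cases h0a : a = 0
        · subst h0a
          simp only [coeff_zero_eq_constantCoeff_apply]
          rw [hQ0, hQ0', one_mul, one_mul, Nat.sub_zero]
          simp [(show ¬ (0:ℕ) = k by omega)]
        by_cases hka : a = k
        · subst hka
          rw [Nat.sub_self]
          simp only [coeff_zero_eq_constantCoeff_apply]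
          rw [h0 n, h0' n, mul_one, mul_one]
          simp [h0a]
        · have hak' : a < k := lt_of_le_of_ne hak hka
          rw [ih.1 a hak', hagr n (k - a) (by omega)]
          simp [h0a, hka]
      rw [Finset.sum_congr rfl this, Finset.sum_add_distrib,
        Finset.sum_ite_eq' (Finset.range (k+1)) 0, Finset.sum_ite_eq' (Finset.range (k+1)) k,
        if_pos (Finset.mem_range.2 (by omega)), if_pos (Finset.mem_range.2 (by omega))]
      ring

end Lemmas

noncomputable def omA {K : Type*} [Field K] (g : K⟦X⟧) (n : ℕ) : ℕ → K
  | 0 => 0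
  | 1 => 1
  | (k+2) => (coeff (k+2) g
      - coeff (k+2) (psIter (PowerSeries.mk fun j =>
          if _h : j < k + 2 then omA g n j else 0) n)) / n
  termination_by k => k
  decreasing_by exact _h

noncomputable def alA {K : Type*} [Field K] (f ω : K⟦X⟧) (n : ℕ) : ℕ → K
  | 0 => 1
  | (k+1) => (coeff (k+1) f
      - coeff (k+1) (∏ i ∈ Finset.range n, psComp (PowerSeries.mk fun j =>
          if _h : j < k + 1 then alA f ω n j else 0) (psIter ω i))) / n
  termination_by k => k
  decreasing_by exact _h


/-- The combined "difference of products" lemma for the `α`-equation. -/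
lemma coeff_prodComp_sub {K : Type*} [Field K] {α α' ω : K⟦X⟧} (hω0 : constantCoeff ω = 0)
    (hω1 : coeff 1 ω = 1) (hα0 : constantCoeff α = 1) (hα0' : constantCoeff α' = 1)
    {k : ℕ} (hk : 1 ≤ k) (hagr : ∀ j < k, coeff j α = coeff j α') (n : ℕ) :
    coeff k (∏ i ∈ Finset.range n, psComp α (psIter ω i))
      - coeff k (∏ i ∈ Finset.range n, psComp α' (psIter ω i))
      = (n : K) * (coeff k α - coeff k α') := by
  have h0 : ∀ i, constantCoeff (psComp α (psIter ω i)) = 1 := fun i => by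
    rw [constantCoeff_psComp, hα0]
  have h0' : ∀ i, constantCoeff (psComp α' (psIter ω i)) = 1 := fun i => by
    rw [constantCoeff_psComp, hα0']
  have hagr' : ∀ i, ∀ j < k, coeff j (psComp α (psIter ω i))
      = coeff j (psComp α' (psIter ω i)) := fun i => by
    have hJ := psIter_inJ hω0 hω1 i
    exact (coeff_psComp_left hJ.1 hJ.2 hagr).1
  have := (coeff_prod_sub h0 h0' hk hagr' n).2
  rw [this]
  have : ∀ i ∈ Finset.range n, coeff k (psComp α (psIter ω i))
      - coeff k (psComp α' (psIter ω i)) = coeff k α - coeff k α' := fun i _ => by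
    have hJ := psIter_inJ hω0 hω1 i
    exact (coeff_psComp_left hJ.1 hJ.2 hagr).2
  rw [Finset.sum_congr rfl this, Finset.sum_const, Finset.card_range, nsmul_eq_mul]

/-- for a field `K` of characteristic 0, the Riordan group `ℛ′(K)` is an
algebraically complete URE-group: for every `R(f,g)` with `f(0) = 1` and `g ∈ 𝒥(K)` and
every `n ≥ 1`, there is a unique pair `(α, ω)` with `α(0) = 1`, `ω ∈ 𝒥(K)`, `ω^[n] = g`
and `∏_{i=0}^{n−1} (α ∘ ω^[i]) = f` (i.e. `R(α,ω)^n = R(f,g)`). -/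
theorem riordan_group_char_zero_complete_URE {K : Type*} [Field K] [CharZero K]
    (f : K⟦X⟧) (hf : constantCoeff f = 1)
    (g : K⟦X⟧) (hg0 : constantCoeff g = 0) (hg1 : coeff 1 g = 1)
    (n : ℕ) (hn : 1 ≤ n) :
    ∃! p : K⟦X⟧ × K⟦X⟧,
      (constantCoeff p.1 = 1 ∧ constantCoeff p.2 = 0 ∧ coeff 1 p.2 = 1) ∧
        psIter p.2 n = g ∧ ∏ i ∈ Finset.range n, psComp p.1 (psIter p.2 i) = f := by
  have hnK : (n : K) ≠ 0 := Nat.cast_ne_zero.2 (by omega)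
  -- the root ω
  set ω : K⟦X⟧ := PowerSeries.mk (omA g n) with hω
  have hω0 : constantCoeff ω = 0 := by
    rw [← coeff_zero_eq_constantCoeff_apply, hω, coeff_mk, omA]
  have hω1 : coeff 1 ω = 1 := by rw [hω, coeff_mk, omA]
  -- truncations of ω
  have htr : ∀ k : ℕ, 2 ≤ k →
      ∃ ψ : K⟦X⟧, (∀ j, coeff j ψ = if j < k then omA g n j else 0) ∧
        constantCoeff ψ = 0 ∧ coeff 1 ψ = 1 ∧
        omA g n k = (coeff k g - coeff k (psIter ψ n)) / n := by
    intro k hk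
    obtain ⟨m, rfl⟩ : ∃ m, k = m + 2 := ⟨k - 2, by omega⟩
    refine ⟨PowerSeries.mk fun j => if _h : j < m + 2 then omA g n j else 0, ?_, ?_, ?_, ?_⟩
    · intro j; rw [coeff_mk]; split_ifs <;> rfl
    · rw [← coeff_zero_eq_constantCoeff_apply, coeff_mk]
      rw [dif_pos (by omega)]; rw [omA]
    · rw [coeff_mk, dif_pos (by omega)]; rw [omA]
    · rw [omA]
  have hωiter : psIter ω n = g := by
    ext k
    rcases Nat.lt_or_ge k 2 with hk | hk
    · interval_cases k
      · rw [coeff_zero_eq_constantCoeff_apply, coeff_zero_eq_constantCoeff_apply,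
          (psIter_inJ hω0 hω1 n).1, hg0]
      · rw [(psIter_inJ hω0 hω1 n).2, hg1]
    · obtain ⟨ψ, hψc, hψ0, hψ1, hψk⟩ := htr k hk
      have hagr : ∀ j < k, coeff j ω = coeff j ψ := fun j hj => by
        rw [hψc j, if_pos hj, hω, coeff_mk]
      have hsub := (coeff_psIter_sub hω0 hψ0 hω1 hψ1 hk hagr n).2
      have hωk : coeff k ω = omA g n k := by rw [hω, coeff_mk]
      have hψkz : coeff k ψ = 0 := by rw [hψc k, if_neg (by omega)]
      rw [hωk, hψkz, hψk] at hsub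
      field_simp at hsub
      simpa using hsub
  -- the series α
  set α : K⟦X⟧ := PowerSeries.mk (alA f ω n) with hα
  have hα0 : constantCoeff α = 1 := by
    rw [← coeff_zero_eq_constantCoeff_apply, hα, coeff_mk, alA]
  have htrα : ∀ k : ℕ, 1 ≤ k →
      ∃ β : K⟦X⟧, (∀ j, coeff j β = if j < k then alA f ω n j else 0) ∧
        constantCoeff β = 1 ∧
        alA f ω n k = (coeff k f
          - coeff k (∏ i ∈ Finset.range n, psComp β (psIter ω i))) / n := by
    intro k hk
    obtain ⟨m, rfl⟩ : ∃ m, k = m + 1 := ⟨k - 1, by omega⟩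
    refine ⟨PowerSeries.mk fun j => if _h : j < m + 1 then alA f ω n j else 0, ?_, ?_, ?_⟩
    · intro j; rw [coeff_mk]; split_ifs <;> rfl
    · rw [← coeff_zero_eq_constantCoeff_apply, coeff_mk, dif_pos (by omega)]; rw [alA]
    · rw [alA]
  have hαprod : ∏ i ∈ Finset.range n, psComp α (psIter ω i) = f := by
    ext k
    rcases Nat.eq_zero_or_pos k with rfl | hk
    · rw [coeff_zero_eq_constantCoeff_apply, coeff_zero_eq_constantCoeff_apply, map_prod, hf]
      exact Finset.prod_eq_one fun i _ => by rw [constantCoeff_psComp, hα0]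
    · obtain ⟨β, hβc, hβ0, hβk⟩ := htrα k hk
      have hagr : ∀ j < k, coeff j α = coeff j β := fun j hj => by
        rw [hβc j, if_pos hj, hα, coeff_mk]
      have hsub := coeff_prodComp_sub hω0 hω1 hα0 hβ0 hk hagr n
      have hαk : coeff k α = alA f ω n k := by rw [hα, coeff_mk]
      have hβkz : coeff k β = 0 := by rw [hβc k, if_neg (by omega)]
      rw [hαk, hβkz, hβk] at hsub
      field_simp at hsub
      simpa using hsub
  refine ⟨(α, ω), ⟨⟨hα0, hω0, hω1⟩, hωiter, hαprod⟩, ?_⟩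
  -- uniqueness
  rintro ⟨α', ω'⟩ ⟨⟨hα0', hω0', hω1'⟩, hiter', hprod'⟩
  have hωeq : ω' = ω := by
    ext k
    induction k using Nat.strong_induction_on with
    | _ k ih =>
      rcases Nat.lt_or_ge k 2 with hk | hk
      · interval_cases k
        · rw [coeff_zero_eq_constantCoeff_apply, coeff_zero_eq_constantCoeff_apply, hω0, hω0']
        · rw [hω1, hω1']
      · have hsub := (coeff_psIter_sub hω0' hω0 hω1' hω1 hk ih n).2
        rw [hiter', hωiter, sub_self] at hsub
        exact sub_eq_zero.1 ((mul_eq_zero.1 hsub.symm).resolve_left hnK)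
  subst hωeq
  have hαeq : α' = α := by
    ext k
    induction k using Nat.strong_induction_on with
    | _ k ih =>
      rcases Nat.eq_zero_or_pos k with rfl | hk
      · rw [coeff_zero_eq_constantCoeff_apply, coeff_zero_eq_constantCoeff_apply, hα0, hα0']
      · have hsub := coeff_prodComp_sub hω0 hω1 hα0' hα0 hk ih n
        rw [hprod', hαprod, sub_self] at hsub
        exact sub_eq_zero.1 ((mul_eq_zero.1 hsub.symm).resolve_left hnK)
  subst hαeq
  rfl
end
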